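/- Let r: ℝ² → iso(2,1) ⊗ iso(2,1) be given by r_b(ψ,α) = ½(P_a⊗J^a + J^a⊗P_a) + ½ tanh(ψ/2)(P_2∧J_0 - P_0∧J_2) + (α/(4cosh²(ψ/2))) P_2∧P_0, where X∧Y := X⊗Y - Y⊗X. Then r_b is a classical dynamical r-matrix for the Cartan subalgebra h_b = span{J_1, P_1}: it is h_b-invariant and satisfies the classical dynamical Yang-Baxter equation with x_1 = P_1, x_2 = J_1 and dynamical variables (ψ, α). -/

import Mathlib

open Real BigOperators Finset

noncomputable section

/-- Vectors in ℝ³. -/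
abbrev V3 : Type := Fin 3 → ℝ

/-- Minkowski metric η = diag(1,-1,-1). -/
def ηm : Fin 3 → ℝ := ![1, -1, -1]

/-- Totally antisymmetric symbol with ε₀₁₂ = 1. -/
def eps : Fin 3 → Fin 3 → Fin 3 → ℝ := fun a b c =>
  if (a, b, c) = ((0 : Fin 3), (1 : Fin 3), (2 : Fin 3)) ∨ (a, b, c) = (1, 2, 0) ∨ (a, b, c) = (2, 0, 1) then 1
  else if (a, b, c) = ((0 : Fin 3), (2 : Fin 3), (1 : Fin 3)) ∨ (a, b, c) = (2, 1, 0) ∨ (a, b, c) = (1, 0, 2) then -1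
  else 0

/-- An element of iso(2,1) is encoded by its J-coefficients and P-coefficients:
`(j, p)` represents `Σ j^a J_a + Σ p^a P_a`. -/
abbrev iso21 : Type := V3 × V3

def Jvec (x : V3) : iso21 := (x, 0)
def Pvec (x : V3) : iso21 := (0, x)
def Jb (a : Fin 3) : iso21 := Jvec (fun i => if i = a then 1 else 0)
def Pb (a : Fin 3) : iso21 := Pvec (fun i => if i = a then 1 else 0)

/-- The Lie bracket of iso(2,1): [J_a,J_b] = ε_{ab}^c J_c, [J_a,P_b] = ε_{ab}^c P_c,
[P_a,P_b] = 0, with ε_{ab}^c = η^{cc} ε_{abc}. -/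
def br (x y : iso21) : iso21 :=
  (fun c => ∑ a, ∑ b, x.1 a * y.1 b * (ηm c * eps a b c),
   fun c => ∑ a, ∑ b, (x.1 a * y.2 b + x.2 a * y.1 b) * (ηm c * eps a b c))

/-- The Ad-invariant pairing ⟨J_a,P_b⟩ = η_{ab}, ⟨J,J⟩ = ⟨P,P⟩ = 0. -/
def pairing (x y : iso21) : ℝ := ∑ a, ηm a * (x.1 a * y.2 a + x.2 a * y.1 a)

/-- Minkowski inner product on ℝ³. -/
def mdot (x y : V3) : ℝ := ∑ a, ηm a * x a * y a

/-- Lorentzian cross product (x∧y)^a = ε^{abc} x_b y_c. -/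
def crossL (x y : V3) : V3 := fun a => ηm a * ∑ b, ∑ c, eps a b c * x b * y c

/-- Index set of the basis {J_a, P_a}: `false` ↦ J, `true` ↦ P. -/
abbrev Bas : Type := Bool × Fin 3

def basis : Bas → iso21 := fun p => if p.1 then Pb p.2 else Jb p.2
def coeff (x : iso21) (p : Bas) : ℝ := if p.1 then x.2 p.2 else x.1 p.2

/-- 2-tensors and 3-tensors over iso(2,1), given by their coefficients in the basis. -/
abbrev TT2 : Type := Bas → Bas → ℝ
abbrev TT3 : Type := Bas → Bas → Bas → ℝ

def tens (x y : iso21) : TT2 := fun μ ν => coeff x μ * coeff y ν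

/-- Structure constants: coefficient of `[T_a, T_c]` on `T_m`. -/
def Cstr (a c m : Bas) : ℝ := coeff (br (basis a) (basis c)) m

/-- The mixed Yang-Baxter expression [[r,s]] = [r₁₂,s₁₃] + [r₁₂,s₂₃] + [r₁₃,s₂₃]. -/
def YB2 (r s : TT2) : TT3 := fun μ ν lam =>
    (∑ a, ∑ c, r a ν * s c lam * Cstr a c μ)
  + (∑ b, ∑ c, r μ b * s c lam * Cstr b c ν)
  + (∑ b, ∑ d, r μ b * s ν d * Cstr b d lam)

/-- The action of X on a 2-tensor: [X⊗1 + 1⊗X, r]. -/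
def act2 (x : iso21) (r : TT2) : TT2 := fun μ ν =>
  (∑ a, r a ν * coeff (br x (basis a)) μ) + (∑ b, r μ b * coeff (br x (basis b)) ν)

/-- The classical r-matrix r = P_a ⊗ J^a. -/
def rPJ : TT2 := fun μ ν => ∑ a, ηm a * tens (Pb a) (Jb a) μ ν

/-- The symmetric part r_S = ½(P_a⊗J^a + J^a⊗P_a). -/
def rSym : TT2 := fun μ ν => (1/2) * ∑ a, ηm a * (tens (Pb a) (Jb a) μ ν + tens (Jb a) (Pb a) μ ν)

/-- The classical dynamical Yang-Baxter equation at (ψ,α) with dynamical elements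
x₁ (paired with ψ) and x₂ (paired with α). -/
def CDYBEat (r : ℝ → ℝ → TT2) (x1 x2 : ℝ → ℝ → iso21) (ψ α : ℝ) : Prop :=
  ∀ μ ν lam : Bas, YB2 (r ψ α) (r ψ α) μ ν lam =
      coeff (x1 ψ α) μ * deriv (fun s => r s α ν lam) ψ
    - coeff (x1 ψ α) ν * deriv (fun s => r s α μ lam) ψ
    + coeff (x1 ψ α) lam * deriv (fun s => r s α μ ν) ψ
    + coeff (x2 ψ α) μ * deriv (fun s => r ψ s ν lam) α
    - coeff (x2 ψ α) ν * deriv (fun s => r ψ s μ lam) α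
    + coeff (x2 ψ α) lam * deriv (fun s => r ψ s μ ν) α

/-- Adjoint action of a Lorentz matrix g on iso(2,1). -/
def adL (g : Matrix (Fin 3) (Fin 3) ℝ) (x : iso21) : iso21 := (g.mulVec x.1, g.mulVec x.2)

/-- Adjoint action of a translation t on iso(2,1): J_a ↦ J_a + ε_{ab}^c t^b P_c, P_a ↦ P_a. -/
def adT (t : V3) (x : iso21) : iso21 :=
  (x.1, fun c => x.2 c + ∑ a, ∑ b, x.1 a * t b * (ηm c * eps a b c))

/-- The proper orthochronous Lorentz group SO⁺(2,1) as 3×3 matrices. -/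
def SOplus : Set (Matrix (Fin 3) (Fin 3) ℝ) :=
  {g | g.transpose * Matrix.diagonal ηm * g = Matrix.diagonal ηm ∧ g.det = 1 ∧ 0 < g 0 0}

/-- The induced action of a linear map on 2-tensors, A⊗A. -/
def Ad2 (A : iso21 → iso21) (r : TT2) : TT2 :=
  fun μ ν => ∑ a : Bas, ∑ b : Bas, r a b * coeff (A (basis a)) μ * coeff (A (basis b)) ν

/-- r(ψ,α) = P_a⊗J^a - V^{bc}(ψ)(P_b⊗J_c - J_c⊗P_b) + ε^{bcd} m_d(ψ,α) P_b⊗P_c. -/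
def rVm (V : ℝ → Matrix (Fin 3) (Fin 3) ℝ) (m : ℝ → ℝ → V3) (ψ α : ℝ) : TT2 := fun μ ν =>
  rPJ μ ν
  - (∑ b, ∑ c, V ψ b c * (tens (Pb b) (Jb c) μ ν - tens (Jb c) (Pb b) μ ν))
  + ∑ b, ∑ c, ∑ d, ηm b * ηm c * eps b c d * m ψ α d * tens (Pb b) (Pb c) μ ν

/-- The vector w defined by ε^{abc} w_c = V^{ab} - V^{ba}. -/
def wOf (V : ℝ → Matrix (Fin 3) (Fin 3) ℝ) (ψ : ℝ) : V3 := fun c =>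
  (1/2) * ∑ a, ∑ b, ηm a * ηm b * eps a b c * (V ψ a b - V ψ b a)

/-- CDYBE condition (i) at (ψ,α), componentwise in (a,b,c). -/
def Cond1At (V : ℝ → Matrix (Fin 3) (Fin 3) ℝ) (m : ℝ → ℝ → V3) (qψ qα : ℝ → V3)
    (ψ α : ℝ) : Prop :=
  ∀ a b c : Fin 3,
    qα ψ a * (∑ d, ηm b * ηm c * eps b c d * deriv (fun s => m ψ s d) α)
    - qψ ψ b * deriv (fun s => V s c a) ψ
    + qψ ψ c * deriv (fun s => V s b a) ψ
    - (∑ d, ∑ g, V ψ b d * V ψ c g * (ηm a * eps d g a))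
    - (∑ d, ∑ g, V ψ d a * V ψ c g * (ηm b * eps d g b))
    + (∑ d, ∑ g, V ψ d a * V ψ b g * (ηm c * eps d g c))
    - (∑ d, V ψ d a * (ηm b * ηm c * eps b c d)) = 0

/-- CDYBE condition (ii) at (ψ,α): q_ψ·∂_ψ m + q_θ·∂_α m + w·m = 0. -/
def Cond2At (V : ℝ → Matrix (Fin 3) (Fin 3) ℝ) (m : ℝ → ℝ → V3) (qψ : ℝ → V3)
    (qθ : ℝ → ℝ → V3) (ψ α : ℝ) : Prop :=
  mdot (qψ ψ) (fun a => deriv (fun s => m s α a) ψ)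
  + mdot (qθ ψ α) (fun a => deriv (fun s => m ψ s a) α)
  + mdot (wOf V ψ) (m ψ α) = 0

def wedgeT (x y : iso21) : TT2 := fun μ ν => tens x y μ ν - tens y x μ ν

/-- The standard dynamical r-matrix for the Cartan subalgebra span{J₀,P₀}. -/
def ra (ψ α : ℝ) : TT2 := fun μ ν =>
  rSym μ ν + (1/2) * Real.tan (ψ/2) * (wedgeT (Pb 1) (Jb 2) μ ν - wedgeT (Pb 2) (Jb 1) μ ν)
  + α / (4 * (Real.cos (ψ/2))^2) * wedgeT (Pb 1) (Pb 2) μ ν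

/-- The standard dynamical r-matrix for the Cartan subalgebra span{J₁,P₁}. -/
def rb (ψ α : ℝ) : TT2 := fun μ ν =>
  rSym μ ν + (1/2) * Real.tanh (ψ/2) * (wedgeT (Pb 2) (Jb 0) μ ν - wedgeT (Pb 0) (Jb 2) μ ν)
  + α / (4 * (Real.cosh (ψ/2))^2) * wedgeT (Pb 2) (Pb 0) μ ν

/-! ### Auxiliary lemmas -/

lemma hasDerivAt_rb_psi (α : ℝ) (μ ν : Bas) (ψ : ℝ) :
    HasDerivAt (fun s => rb s α μ ν)
      (1/(4*Real.cosh (ψ/2)^2) * (wedgeT (Pb 2) (Jb 0) μ ν - wedgeT (Pb 0) (Jb 2) μ ν)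
       - α * Real.sinh (ψ/2) / (4*Real.cosh (ψ/2)^3) * wedgeT (Pb 2) (Pb 0) μ ν) ψ := by
  have hc : Real.cosh (ψ/2) ≠ 0 := (Real.cosh_pos _).ne'
  have h2 : HasDerivAt (fun s : ℝ => s/2) (1/2) ψ := by
    simpa using (hasDerivAt_id ψ).div_const 2
  have hcosh : HasDerivAt (fun s => Real.cosh (s/2)) (Real.sinh (ψ/2) * (1/2)) ψ :=
    (Real.hasDerivAt_cosh _).comp ψ h2
  have hsinh : HasDerivAt (fun s => Real.sinh (s/2)) (Real.cosh (ψ/2) * (1/2)) ψ :=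
    (Real.hasDerivAt_sinh _).comp ψ h2
  have htanh : HasDerivAt (fun s => Real.tanh (s/2))
      ((Real.cosh (ψ/2) * (1/2) * Real.cosh (ψ/2) - Real.sinh (ψ/2) * (Real.sinh (ψ/2) * (1/2)))
        / Real.cosh (ψ/2)^2) ψ := by
    simp only [Real.tanh_eq_sinh_div_cosh]; exact hsinh.div hcosh hc
  have hden : HasDerivAt (fun s => 4*Real.cosh (s/2)^2)
      (4 * ((2:ℕ) * Real.cosh (ψ/2)^1 * (Real.sinh (ψ/2) * (1/2)))) ψ :=
    (hcosh.pow 2).const_mul 4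
  have hfrac : HasDerivAt (fun s => α / (4*Real.cosh (s/2)^2))
      ((0 * (4*Real.cosh (ψ/2)^2) - α * (4 * ((2:ℕ) * Real.cosh (ψ/2)^1 * (Real.sinh (ψ/2) * (1/2)))))
        / (4*Real.cosh (ψ/2)^2)^2) ψ :=
    (hasDerivAt_const ψ α).div hden (by positivity)
  have H := ((hasDerivAt_const ψ (rSym μ ν)).add
      ((htanh.const_mul (1/2)).mul_const (wedgeT (Pb 2) (Jb 0) μ ν - wedgeT (Pb 0) (Jb 2) μ ν))).add
      (hfrac.mul_const (wedgeT (Pb 2) (Pb 0) μ ν))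
  have hs := Real.cosh_sq_sub_sinh_sq (ψ/2)
  simp only [rb]
  refine H.congr_deriv (Eq.symm ?_)
  field_simp
  linear_combination (-(4:ℝ) * Real.cosh (ψ/2) *
    (wedgeT (Pb 2) (Jb 0) μ ν - wedgeT (Pb 0) (Jb 2) μ ν)) * hs

lemma hasDerivAt_rb_alpha (ψ : ℝ) (μ ν : Bas) (α : ℝ) :
    HasDerivAt (fun s => rb ψ s μ ν)
      (1/(4*Real.cosh (ψ/2)^2) * wedgeT (Pb 2) (Pb 0) μ ν) α := by
  have H := ((hasDerivAt_const α (rSym μ ν + 1/2 * Real.tanh (ψ/2) *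
      (wedgeT (Pb 2) (Jb 0) μ ν - wedgeT (Pb 0) (Jb 2) μ ν)))).add
      (((hasDerivAt_id α).div_const (4*Real.cosh (ψ/2)^2)).mul_const (wedgeT (Pb 2) (Pb 0) μ ν))
  simp only [rb]
  refine H.congr_deriv (Eq.symm ?_)
  all_goals first
    | ring
    | (funext s; simp only [id_eq]; ring)

lemma deriv_rb_psi (α ψ : ℝ) (μ ν : Bas) :
    deriv (fun s => rb s α μ ν) ψ =
      1/(4*Real.cosh (ψ/2)^2) * (wedgeT (Pb 2) (Jb 0) μ ν - wedgeT (Pb 0) (Jb 2) μ ν)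
       - α * Real.sinh (ψ/2) / (4*Real.cosh (ψ/2)^3) * wedgeT (Pb 2) (Pb 0) μ ν :=
  (hasDerivAt_rb_psi α μ ν ψ).deriv

lemma deriv_rb_alpha (ψ α : ℝ) (μ ν : Bas) :
    deriv (fun s => rb ψ s μ ν) α =
      1/(4*Real.cosh (ψ/2)^2) * wedgeT (Pb 2) (Pb 0) μ ν :=
  (hasDerivAt_rb_alpha ψ μ ν α).deriv

/-- Lookup table for the Lorentz part of `rb`. -/
def Mt (t : ℝ) : Fin 3 → Fin 3 → ℝ := fun i j =>
  if i = 0 ∧ j = 0 then 1/2 else if i = 1 ∧ j = 1 then -1/2 else if i = 2 ∧ j = 2 then -1/2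
  else if i = 2 ∧ j = 0 then t else if i = 0 ∧ j = 2 then -t else 0

/-- Lookup table for `rb` with `t = tanh(ψ/2)/2` and `u = α/(4cosh²(ψ/2))`. -/
def Rb (t u : ℝ) : TT2 := fun μ ν =>
  if μ.1 then (if ν.1 then (if μ.2 = 2 ∧ ν.2 = 0 then u else if μ.2 = 0 ∧ ν.2 = 2 then -u else 0)
    else Mt t μ.2 ν.2)
  else (if ν.1 then Mt t μ.2 ν.2 else 0)

lemma rb_eq (ψ α : ℝ) : rb ψ α =
    Rb (Real.sinh (ψ/2)/(2*Real.cosh (ψ/2))) (α/(4*Real.cosh (ψ/2)^2)) := by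
  funext μ ν; obtain ⟨b,i⟩ := μ; obtain ⟨b',j⟩ := ν
  cases b <;> cases b' <;> fin_cases i <;> fin_cases j <;>
    simp [rb, Rb, Mt, rSym, rPJ, wedgeT, tens, coeff, Pb, Jb, Pvec, Jvec, ηm,
      Real.tanh_eq_sinh_div_cosh, Fin.sum_univ_three] <;> ring

/-- Lookup table for the structure constants. -/
def Cs : Bas → Bas → Bas → ℝ := fun a c m =>
  if (a.1 = false ∧ c.1 = false ∧ m.1 = false) ∨ (a.1 ≠ c.1 ∧ m.1 = true)
  then ηm m.2 * eps a.2 c.2 m.2 else 0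

set_option maxHeartbeats 2000000 in
lemma Cstr_eq : Cstr = Cs := by
  funext a c m; obtain ⟨b1,i⟩ := a; obtain ⟨b2,j⟩ := c; obtain ⟨b3,k⟩ := m
  cases b1 <;> cases b2 <;> cases b3 <;> fin_cases i <;> fin_cases j <;> fin_cases k <;>
    simp [Cstr, Cs, coeff, basis, br, Jb, Pb, Jvec, Pvec, ηm, eps, Prod.ext_iff, Fin.sum_univ_three]

set_option maxHeartbeats 2000000 in
lemma act2_Jb1 (ψ α : ℝ) : act2 (Jb 1) (rb ψ α) = 0 := by
  rw [rb_eq]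
  funext μ ν; obtain ⟨b1,i1⟩ := μ; obtain ⟨b2,i2⟩ := ν
  cases b1 <;> cases b2 <;> fin_cases i1 <;> fin_cases i2 <;>
    simp [act2, Rb, Mt, br, coeff, basis, Pb, Jb, Pvec, Jvec, ηm, eps, Prod.ext_iff,
      Fintype.sum_prod_type, Fintype.sum_bool, Fin.sum_univ_three] <;> try ring

set_option maxHeartbeats 2000000 in
lemma act2_Pb1 (ψ α : ℝ) : act2 (Pb 1) (rb ψ α) = 0 := by
  rw [rb_eq]
  funext μ ν; obtain ⟨b1,i1⟩ := μ; obtain ⟨b2,i2⟩ := ν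
  cases b1 <;> cases b2 <;> fin_cases i1 <;> fin_cases i2 <;>
    simp [act2, Rb, Mt, br, coeff, basis, Pb, Jb, Pvec, Jvec, ηm, eps, Prod.ext_iff,
      Fintype.sum_prod_type, Fintype.sum_bool, Fin.sum_univ_three] <;> try ring

lemma br_add_left (x y z : iso21) : br (x + y) z = br x z + br y z := by
  refine Prod.ext ?_ ?_ <;> funext c <;>
    simp [br, Prod.fst_add, Prod.snd_add, Pi.add_apply, Fin.sum_univ_three] <;> ring

lemma br_smul_left (c : ℝ) (x z : iso21) : br (c • x) z = c • br x z := by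
  refine Prod.ext ?_ ?_ <;> funext m <;>
    simp [br, Prod.smul_fst, Prod.smul_snd, Pi.smul_apply, smul_eq_mul, Fin.sum_univ_three] <;> ring

lemma coeff_add (u v : iso21) (p : Bas) : coeff (u + v) p = coeff u p + coeff v p := by
  obtain ⟨b,i⟩ := p; cases b <;> simp [coeff]

lemma coeff_smul (c : ℝ) (u : iso21) (p : Bas) : coeff (c • u) p = c * coeff u p := by
  obtain ⟨b,i⟩ := p; cases b <;> simp [coeff]

lemma act2_add (x y : iso21) (r : TT2) : act2 (x + y) r = act2 x r + act2 y r := by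
  funext μ ν
  simp [act2, br_add_left, coeff_add, Pi.add_apply,
    Fintype.sum_prod_type, Fintype.sum_bool, Fin.sum_univ_three]
  ring

lemma act2_smul (c : ℝ) (x : iso21) (r : TT2) : act2 (c • x) r = c • act2 x r := by
  funext μ ν
  simp [act2, br_smul_left, coeff_smul, Pi.smul_apply, smul_eq_mul,
    Fintype.sum_prod_type, Fintype.sum_bool, Fin.sum_univ_three]
  ring

lemma act2_zero (r : TT2) : act2 (0 : iso21) r = 0 := by
  have h : ((0 : iso21)) = (0 : ℝ) • (0 : iso21) := by simp
  rw [h, act2_smul]; simp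


/-- One component of the CDYBE for `rb`. -/
def CDE (ψ α : ℝ) (μ ν lam : Bas) : Prop :=
  YB2 (rb ψ α) (rb ψ α) μ ν lam =
      coeff (Pb 1) μ * deriv (fun s => rb s α ν lam) ψ
    - coeff (Pb 1) ν * deriv (fun s => rb s α μ lam) ψ
    + coeff (Pb 1) lam * deriv (fun s => rb s α μ ν) ψ
    + coeff (Jb 1) μ * deriv (fun s => rb ψ s ν lam) α
    - coeff (Jb 1) ν * deriv (fun s => rb ψ s μ lam) α
    + coeff (Jb 1) lam * deriv (fun s => rb ψ s μ ν) α

set_option maxHeartbeats 2000000 in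
lemma cdybe_case_fff (ψ α : ℝ) (i1 i2 i3 : Fin 3) : CDE ψ α (false,i1) (false,i2) (false,i3) := by
  have hc : Real.cosh (ψ/2) ≠ 0 := (Real.cosh_pos _).ne'
  simp only [CDE, deriv_rb_psi, deriv_rb_alpha]
  simp only [YB2, rb_eq, Cstr_eq]
  fin_cases i1 <;> fin_cases i2 <;> fin_cases i3 <;>
    simp [Rb, Cs, Mt, wedgeT, tens, coeff, Pb, Jb, Pvec, Jvec, ηm, eps, Prod.ext_iff,
      Fintype.sum_prod_type, Fintype.sum_bool, Fin.sum_univ_three] <;>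
    try field_simp <;>
    try ring_nf <;>
    try simp only [Real.sinh_sq] <;>
    try ring

set_option maxHeartbeats 2000000 in
lemma cdybe_case_fft (ψ α : ℝ) (i1 i2 i3 : Fin 3) : CDE ψ α (false,i1) (false,i2) (true,i3) := by
  have hc : Real.cosh (ψ/2) ≠ 0 := (Real.cosh_pos _).ne'
  simp only [CDE, deriv_rb_psi, deriv_rb_alpha]
  simp only [YB2, rb_eq, Cstr_eq]
  fin_cases i1 <;> fin_cases i2 <;> fin_cases i3 <;>
    simp [Rb, Cs, Mt, wedgeT, tens, coeff, Pb, Jb, Pvec, Jvec, ηm, eps, Prod.ext_iff,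
      Fintype.sum_prod_type, Fintype.sum_bool, Fin.sum_univ_three] <;>
    try field_simp <;>
    try ring_nf <;>
    try simp only [Real.sinh_sq] <;>
    try ring

set_option maxHeartbeats 2000000 in
lemma cdybe_case_ftf (ψ α : ℝ) (i1 i2 i3 : Fin 3) : CDE ψ α (false,i1) (true,i2) (false,i3) := by
  have hc : Real.cosh (ψ/2) ≠ 0 := (Real.cosh_pos _).ne'
  simp only [CDE, deriv_rb_psi, deriv_rb_alpha]
  simp only [YB2, rb_eq, Cstr_eq]
  fin_cases i1 <;> fin_cases i2 <;> fin_cases i3 <;>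
    simp [Rb, Cs, Mt, wedgeT, tens, coeff, Pb, Jb, Pvec, Jvec, ηm, eps, Prod.ext_iff,
      Fintype.sum_prod_type, Fintype.sum_bool, Fin.sum_univ_three] <;>
    try field_simp <;>
    try ring_nf <;>
    try simp only [Real.sinh_sq] <;>
    try ring

set_option maxHeartbeats 2000000 in
lemma cdybe_case_ftt (ψ α : ℝ) (i1 i2 i3 : Fin 3) : CDE ψ α (false,i1) (true,i2) (true,i3) := by
  have hc : Real.cosh (ψ/2) ≠ 0 := (Real.cosh_pos _).ne'
  simp only [CDE, deriv_rb_psi, deriv_rb_alpha]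
  simp only [YB2, rb_eq, Cstr_eq]
  fin_cases i1 <;> fin_cases i2 <;> fin_cases i3 <;>
    simp [Rb, Cs, Mt, wedgeT, tens, coeff, Pb, Jb, Pvec, Jvec, ηm, eps, Prod.ext_iff,
      Fintype.sum_prod_type, Fintype.sum_bool, Fin.sum_univ_three] <;>
    try field_simp <;>
    try ring_nf <;>
    try simp only [Real.sinh_sq] <;>
    try ring

set_option maxHeartbeats 2000000 in
lemma cdybe_case_tff (ψ α : ℝ) (i1 i2 i3 : Fin 3) : CDE ψ α (true,i1) (false,i2) (false,i3) := by
  have hc : Real.cosh (ψ/2) ≠ 0 := (Real.cosh_pos _).ne'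
  simp only [CDE, deriv_rb_psi, deriv_rb_alpha]
  simp only [YB2, rb_eq, Cstr_eq]
  fin_cases i1 <;> fin_cases i2 <;> fin_cases i3 <;>
    simp [Rb, Cs, Mt, wedgeT, tens, coeff, Pb, Jb, Pvec, Jvec, ηm, eps, Prod.ext_iff,
      Fintype.sum_prod_type, Fintype.sum_bool, Fin.sum_univ_three] <;>
    try field_simp <;>
    try ring_nf <;>
    try simp only [Real.sinh_sq] <;>
    try ring

set_option maxHeartbeats 2000000 in
lemma cdybe_case_tft (ψ α : ℝ) (i1 i2 i3 : Fin 3) : CDE ψ α (true,i1) (false,i2) (true,i3) := by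
  have hc : Real.cosh (ψ/2) ≠ 0 := (Real.cosh_pos _).ne'
  simp only [CDE, deriv_rb_psi, deriv_rb_alpha]
  simp only [YB2, rb_eq, Cstr_eq]
  fin_cases i1 <;> fin_cases i2 <;> fin_cases i3 <;>
    simp [Rb, Cs, Mt, wedgeT, tens, coeff, Pb, Jb, Pvec, Jvec, ηm, eps, Prod.ext_iff,
      Fintype.sum_prod_type, Fintype.sum_bool, Fin.sum_univ_three] <;>
    try field_simp <;>
    try ring_nf <;>
    try simp only [Real.sinh_sq] <;>
    try ring

set_option maxHeartbeats 2000000 in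
lemma cdybe_case_ttf (ψ α : ℝ) (i1 i2 i3 : Fin 3) : CDE ψ α (true,i1) (true,i2) (false,i3) := by
  have hc : Real.cosh (ψ/2) ≠ 0 := (Real.cosh_pos _).ne'
  simp only [CDE, deriv_rb_psi, deriv_rb_alpha]
  simp only [YB2, rb_eq, Cstr_eq]
  fin_cases i1 <;> fin_cases i2 <;> fin_cases i3 <;>
    simp [Rb, Cs, Mt, wedgeT, tens, coeff, Pb, Jb, Pvec, Jvec, ηm, eps, Prod.ext_iff,
      Fintype.sum_prod_type, Fintype.sum_bool, Fin.sum_univ_three] <;>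
    try field_simp <;>
    try ring_nf <;>
    try simp only [Real.sinh_sq] <;>
    try ring

set_option maxHeartbeats 2000000 in
lemma cdybe_case_ttt (ψ α : ℝ) (i1 i2 i3 : Fin 3) : CDE ψ α (true,i1) (true,i2) (true,i3) := by
  have hc : Real.cosh (ψ/2) ≠ 0 := (Real.cosh_pos _).ne'
  simp only [CDE, deriv_rb_psi, deriv_rb_alpha]
  simp only [YB2, rb_eq, Cstr_eq]
  fin_cases i1 <;> fin_cases i2 <;> fin_cases i3 <;>
    simp [Rb, Cs, Mt, wedgeT, tens, coeff, Pb, Jb, Pvec, Jvec, ηm, eps, Prod.ext_iff,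
      Fintype.sum_prod_type, Fintype.sum_bool, Fin.sum_univ_three] <;>
    try field_simp <;>
    try ring_nf <;>
    try simp only [Real.sinh_sq] <;>
    try ring

lemma cdybe_rb (ψ α : ℝ) : CDYBEat rb (fun _ _ => Pb 1) (fun _ _ => Jb 1) ψ α := by
  intro μ ν lam
  obtain ⟨b1,i1⟩ := μ; obtain ⟨b2,i2⟩ := ν; obtain ⟨b3,i3⟩ := lam
  have h : CDE ψ α (b1,i1) (b2,i2) (b3,i3) := by
    cases b1 <;> cases b2 <;> cases b3
    · exact cdybe_case_fff ψ α i1 i2 i3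
    · exact cdybe_case_fft ψ α i1 i2 i3
    · exact cdybe_case_ftf ψ α i1 i2 i3
    · exact cdybe_case_ftt ψ α i1 i2 i3
    · exact cdybe_case_tff ψ α i1 i2 i3
    · exact cdybe_case_tft ψ α i1 i2 i3
    · exact cdybe_case_ttf ψ α i1 i2 i3
    · exact cdybe_case_ttt ψ α i1 i2 i3
  exact h

/-- r_b(ψ,α) = ½(P_a⊗J^a + J^a⊗P_a) + ½tanh(ψ/2)(P₂∧J₀ - P₀∧J₂)
+ (α/(4cosh²(ψ/2))) P₂∧P₀ is a classical dynamical r-matrix for h_b = span{J₁,P₁}: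
it is h_b-invariant and satisfies the CDYBE with x₁ = P₁, x₂ = J₁. -/
theorem stmt9 :
    ∀ ψ α : ℝ,
      (∀ x ∈ Submodule.span ℝ ({Jb 1, Pb 1} : Set iso21), act2 x (rb ψ α) = 0) ∧
      CDYBEat rb (fun _ _ => Pb 1) (fun _ _ => Jb 1) ψ α := by
  intro ψ α
  refine ⟨?_, cdybe_rb ψ α⟩
  intro x hx
  refine Submodule.span_induction (p := fun y _ => act2 y (rb ψ α) = 0) ?_ ?_ ?_ ?_ hx
  · rintro y (rfl | rfl)
    · exact act2_Jb1 ψ α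
    · exact act2_Pb1 ψ α
  · exact act2_zero _
  · intro a b _ _ ha hb; rw [act2_add, ha, hb, add_zero]
  · intro c a _ ha; rw [act2_smul, ha, smul_zero]
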